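/- Let u₁,…,u_k : ℕ → ℤ. Suppose there exist real numbers θ₁,…,θ_k and a real polynomial P such that D = sup_{n ∈ ℕ} |Σ_{i=1}^k θ_i u_i(n) − P(n)| < ∞. Assume moreover that there exist β > 0 and ρ > 0 such that ‖β·P(n)‖ ≥ ρ for every n ∈ ℕ, and β·D < ρ. Then there exists a set E ⊆ ℕ of positive natural density such that R_{u₁}(E) ∩ ⋯ ∩ R_{u_k}(E) = ∅. -/

import Mathlib

open Filter

/-- Distance from a real number to the nearest integer. -/
noncomputable def distNearestInt (x : ℝ) : ℝ := |x - round x|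

/-- A set of naturals is thick if it contains arbitrarily long blocks of
consecutive integers. -/
def Thick (S : Set ℕ) : Prop := ∀ L : ℕ, ∃ N : ℕ, ∀ j : ℕ, j ≤ L → N + j ∈ S

/-- A set of naturals is syndetic if it has bounded gaps. -/
def Syndetic (S : Set ℕ) : Prop :=
  ∃ G : ℕ, 0 < G ∧ ∀ a : ℕ, ∃ n ∈ S, a ≤ n ∧ n < a + G

/-- A set is piecewise syndetic if it is the intersection of a thick set and a
syndetic set. -/
def PiecewiseSyndetic (S : Set ℕ) : Prop :=
  ∃ T B : Set ℕ, Thick T ∧ Syndetic B ∧ S = T ∩ B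

open Classical in
/-- The number of elements of `E ∩ {1, …, N}`. -/
noncomputable def countIn (E : Set ℕ) (N : ℕ) : ℕ :=
  ((Finset.Icc 1 N).filter (fun n => n ∈ E)).card

/-- `E` has a natural density that exists and is positive. -/
def PosDensity (E : Set ℕ) : Prop :=
  ∃ d : ℝ, 0 < d ∧
    Tendsto (fun N : ℕ => (countIn E N : ℝ) / (N : ℝ)) atTop (nhds d)

/-- The return-time set `R_u(E) = {n : ∃ m ∈ E, m + u n ∈ E}`. -/
def retSet (u : ℕ → ℤ) (E : Set ℕ) : Set ℕ :=
  {n : ℕ | ∃ m m' : ℕ, m ∈ E ∧ m' ∈ E ∧ (m' : ℤ) = (m : ℤ) + u n}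

/-- The return-time set along the floor of a real-valued function. -/
noncomputable def retSetFloor (f : ℝ → ℝ) (E : Set ℕ) : Set ℕ :=
  retSet (fun n => ⌊f (n : ℝ)⌋) E

/-- The return-time set along the closest integer to a real-valued function. -/
noncomputable def retSetRound (f : ℝ → ℝ) (E : Set ℕ) : Set ℕ :=
  retSet (fun n => round (f (n : ℝ))) E


lemma dni_le_int (x : ℝ) (m : ℤ) : distNearestInt x ≤ |x - m| := by
  rw [distNearestInt, abs_sub_round_eq_min]
  rcases le_or_gt (m : ℝ) x with h | h
  · rcases le_or_gt m ⌊x⌋ with h2 | h2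
    · refine min_le_of_left_le ?_
      rw [abs_of_nonneg (by linarith)]
      have : (m:ℝ) ≤ ⌊x⌋ := by exact_mod_cast h2
      have := Int.floor_le x
      rw [Int.fract]; linarith
    · exfalso
      have : (⌊x⌋:ℝ) + 1 ≤ m := by exact_mod_cast h2
      have := Int.lt_floor_add_one x
      linarith
  · refine min_le_of_right_le ?_
    have h2 : ⌊x⌋ + 1 ≤ m := by
      have : ⌊x⌋ < m := Int.floor_lt.2 h
      omega
    have : (⌊x⌋:ℝ) + 1 ≤ m := by exact_mod_cast h2
    rw [abs_of_nonpos (by linarith)]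
    rw [Int.fract]
    linarith

lemma dni_nonneg (x : ℝ) : 0 ≤ distNearestInt x := abs_nonneg _

lemma dni_add (x y : ℝ) : distNearestInt (x + y) ≤ distNearestInt x + distNearestInt y := by
  calc distNearestInt (x + y) ≤ |x + y - ((round x + round y : ℤ) : ℝ)| := dni_le_int _ _
    _ ≤ |x - round x| + |y - round y| := by
        push_cast
        rw [show x + y - ((round x : ℝ) + round y) = (x - round x) + (y - round y) by ring]
        exact abs_add_le _ _
    _ = _ := rfl

lemma dni_sub (x y : ℝ) : distNearestInt (x - y) ≤ distNearestInt x + distNearestInt y := by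
  calc distNearestInt (x - y) ≤ |x - y - ((round x - round y : ℤ) : ℝ)| := dni_le_int _ _
    _ ≤ |x - round x| + |y - round y| := by
        push_cast
        rw [show x - y - ((round x : ℝ) - round y) = (x - round x) - (y - round y) by ring]
        exact abs_sub _ _
    _ = _ := rfl

lemma dni_lower (x y : ℝ) : distNearestInt x - |x - y| ≤ distNearestInt y := by
  have h : distNearestInt x ≤ |x - round y| := dni_le_int _ _
  have : |x - round y| ≤ |x - y| + |y - round y| := by
    rw [show x - (round y : ℝ) = (x - y) + (y - round y) by ring]; exact abs_add_le _ _
  have h3 : |y - round y| = distNearestInt y := rfl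
  have h4 : distNearestInt x ≤ |x - y| + distNearestInt y := by linarith
  linarith

lemma dni_sum {k : ℕ} (f : Fin k → ℝ) (s : Finset (Fin k)) :
    distNearestInt (∑ i ∈ s, f i) ≤ ∑ i ∈ s, distNearestInt (f i) := by
  induction s using Finset.cons_induction with
  | empty => simp [distNearestInt]
  | cons a s ha ih =>
    rw [Finset.sum_cons, Finset.sum_cons]
    exact (dni_add _ _).trans (by linarith)


lemma bohr_syndetic (k : ℕ) (α : Fin k → ℝ) (K : ℕ) (hK : 0 < K) :
    ∃ M : ℕ, ∀ a : ℕ, ∃ b : ℕ, a ≤ b ∧ b ≤ a + M ∧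
      ∀ i, distNearestInt (α i * b) < 1 / K := by
  classical
  set cell : ℕ → (Fin k → ℤ) := fun m i => ⌊(K : ℝ) * Int.fract (α i * m)⌋ with hcell
  set S : Finset (Fin k → ℤ) := Fintype.piFinset (fun _ => Finset.Icc 0 ((K : ℤ) - 1)) with hS
  have hmemS : ∀ m, cell m ∈ S := by
    intro m
    rw [hS, Fintype.mem_piFinset]
    intro i
    rw [Finset.mem_Icc]
    have hc : cell m i = ⌊(K : ℝ) * Int.fract (α i * m)⌋ := rfl
    rw [hc]
    have hKR : (0:ℝ) < K := by exact_mod_cast hK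
    have h0 : (0:ℝ) ≤ (K : ℝ) * Int.fract (α i * m) :=
      mul_nonneg (by positivity) (Int.fract_nonneg _)
    have h1 : (K : ℝ) * Int.fract (α i * m) < K := by
      have := Int.fract_lt_one (α i * m)
      nlinarith
    have h3 : (⌊(K : ℝ) * Int.fract (α i * m)⌋ : ℝ) < K := (Int.floor_le _).trans_lt h1
    have h4 : ⌊(K : ℝ) * Int.fract (α i * m)⌋ < (K : ℤ) := by exact_mod_cast h3
    have h5 : 0 ≤ ⌊(K : ℝ) * Int.fract (α i * m)⌋ := Int.floor_nonneg.2 h0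
    exact ⟨h5, by omega⟩
  set M : ℕ := S.sup (fun v => if h : ∃ m, cell m = v then Nat.find h else 0) with hM
  refine ⟨M, fun a => ?_⟩
  set n := a + M with hn
  have h : ∃ m, cell m = cell n := ⟨n, rfl⟩
  set m₀ := Nat.find h with hm₀
  have hm₀n : m₀ ≤ n := Nat.find_min' h rfl
  have hm₀M : m₀ ≤ M := by
    have h2 : (if h' : ∃ m, cell m = cell n then Nat.find h' else 0) ≤ M :=
      Finset.le_sup (f := fun v => if h : ∃ m, cell m = v then Nat.find h else 0) (hmemS n)
    rwa [dif_pos h] at h2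
  refine ⟨n - m₀, by omega, by omega, fun i => ?_⟩
  have hceq : cell m₀ = cell n := Nat.find_spec h
  have hfl : ⌊(K : ℝ) * Int.fract (α i * m₀)⌋ = ⌊(K : ℝ) * Int.fract (α i * n)⌋ :=
    congrFun hceq i
  have h1 : |(K : ℝ) * Int.fract (α i * n) - (K : ℝ) * Int.fract (α i * m₀)| < 1 :=
    Int.abs_sub_lt_one_of_floor_eq_floor hfl.symm
  have hKR : (0:ℝ) < K := by exact_mod_cast hK
  have h2 : |Int.fract (α i * n) - Int.fract (α i * m₀)| < 1 / K := by
    rw [lt_div_iff₀ hKR]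
    calc |Int.fract (α i * n) - Int.fract (α i * m₀)| * K
        = |(K : ℝ) * Int.fract (α i * n) - (K : ℝ) * Int.fract (α i * m₀)| := by
          rw [show (K:ℝ) * Int.fract (α i * n) - (K:ℝ) * Int.fract (α i * m₀)
              = (Int.fract (α i * n) - Int.fract (α i * m₀)) * K by ring,
            abs_mul, abs_of_pos hKR]
      _ < 1 := h1
  have hcast : ((n - m₀ : ℕ) : ℝ) = (n : ℝ) - m₀ := by
    push_cast [Nat.cast_sub hm₀n]; ring
  have key : distNearestInt (α i * (n - m₀ : ℕ)) ≤
      |Int.fract (α i * n) - Int.fract (α i * m₀)| := by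
    have := dni_le_int (α i * (n - m₀ : ℕ)) (⌊α i * n⌋ - ⌊α i * m₀⌋)
    refine this.trans_eq ?_
    congr 1
    rw [hcast, Int.fract, Int.fract]
    push_cast
    ring
  exact key.trans_lt h2

/-- Proposition 2.4 (Bohr obstruction to nonemptiness). -/
theorem stmt_9 (k : ℕ) (u : Fin k → ℕ → ℤ) (θ : Fin k → ℝ) (P : Polynomial ℝ)
    (D : ℝ) (hD : ∀ n : ℕ, |(∑ i, θ i * (u i n : ℝ)) - P.eval (n : ℝ)| ≤ D)
    (β ρ : ℝ) (hβ : 0 < β) (hρ : 0 < ρ)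
    (hlow : ∀ n : ℕ, ρ ≤ distNearestInt (β * P.eval (n : ℝ)))
    (hβD : β * D < ρ) :
    ∃ E : Set ℕ, PosDensity E ∧ (⋂ i, retSet (u i) E) = ∅ := by
  classical
  set δ : ℝ := ρ - β * D with hδdef
  have hδ : 0 < δ := by simp [hδdef]; linarith
  set α : Fin k → ℝ := fun i => β * θ i with hα
  set K : ℕ := ⌊2 * (k : ℝ) / δ⌋₊ + 1 with hKdef
  have hKpos : 0 < K := Nat.succ_pos _
  have hKR : (0:ℝ) < K := by exact_mod_cast hKpos
  have hKbig : 2 * (k : ℝ) / δ < K := by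
    rw [hKdef]; push_cast; exact Nat.lt_floor_add_one _
  have h2kK : 2 * (k : ℝ) / K < δ := by
    rw [div_lt_iff₀ hKR]
    rw [div_lt_iff₀ hδ] at hKbig
    linarith
  obtain ⟨M, hM⟩ := bohr_syndetic k α K hKpos
  set G : ℕ := M + 1 with hG
  have hGpos : 0 < G := Nat.succ_pos _
  have hGR : (0:ℝ) < G := by exact_mod_cast hGpos
  choose b hb1 hb2 hb3 using hM
  set pick : ℕ → ℕ := fun j => b (j * G) with hpick
  have hlb : ∀ j, j * G ≤ pick j := fun j => hb1 _
  have hub : ∀ j, pick j < (j + 1) * G := by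
    intro j
    have h1 : pick j ≤ j * G + M := hb2 (j * G)
    have h2 : (j + 1) * G = j * G + M + 1 := by rw [hG]; ring
    omega
  set E : Set ℕ := Set.range pick with hE
  have hEprop : ∀ e ∈ E, ∀ i, distNearestInt (α i * e) < 1 / K := by
    rintro e ⟨j, rfl⟩ i
    exact hb3 _ i
  have hmono : StrictMono pick := by
    intro j j' hjj
    calc pick j < (j + 1) * G := hub j
      _ ≤ j' * G := Nat.mul_le_mul_right G hjj
      _ ≤ pick j' := hlb j'
  -- counting bounds
  have hcount_ub : ∀ N : ℕ, countIn E N ≤ N / G + 1 := by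
    intro N
    have hsub : (Finset.Icc 1 N).filter (fun n => n ∈ E) ⊆
        (Finset.Iic (N / G)).image pick := by
      intro x hx
      rw [Finset.mem_filter, Finset.mem_Icc] at hx
      obtain ⟨⟨hx1, hx2⟩, j, rfl⟩ := hx
      rw [Finset.mem_image]
      refine ⟨j, ?_, rfl⟩
      rw [Finset.mem_Iic]
      rw [Nat.le_div_iff_mul_le hGpos]
      exact (hlb j).trans hx2
    have hCI : countIn E N = ((Finset.Icc 1 N).filter (fun n => n ∈ E)).card := rfl
    rw [hCI]
    calc ((Finset.Icc 1 N).filter (fun n => n ∈ E)).card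
        ≤ ((Finset.Iic (N / G)).image pick).card := Finset.card_le_card hsub
      _ ≤ (Finset.Iic (N / G)).card := Finset.card_image_le
      _ = N / G + 1 := Nat.card_Iic _
  have hcount_lb : ∀ N : ℕ, N / G ≤ countIn E N + 1 := by
    intro N
    have hle : (Finset.Ico 1 (N / G)).card ≤ countIn E N := by
      have hCI : countIn E N = ((Finset.Icc 1 N).filter (fun n => n ∈ E)).card := rfl
      rw [hCI]
      apply Finset.card_le_card_of_injOn pick
      · intro j hj
        rw [Finset.mem_coe, Finset.mem_Ico] at hj
        obtain ⟨hj1, hj2⟩ := hj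
        rw [Finset.mem_coe, Finset.mem_filter, Finset.mem_Icc]
        refine ⟨⟨?_, ?_⟩, j, rfl⟩
        · have h1 := hlb j
          have h2 : 1 * G ≤ j * G := Nat.mul_le_mul_right G hj1
          have h3 : 1 * G = G := one_mul G
          omega
        · have h1 : pick j < (j + 1) * G := hub j
          have h2 : (j + 1) * G ≤ (N / G) * G := Nat.mul_le_mul_right G (by omega)
          have h3 : (N / G) * G ≤ N := Nat.div_mul_le_self N G
          omega
      · exact fun a _ a' _ h => hmono.injective h
    rw [Nat.card_Ico] at hle
    omega
  refine ⟨E, ⟨1 / (G : ℝ), by positivity, ?_⟩, ?_⟩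
  · -- density
    have hlo : Tendsto (fun N : ℕ => 1 / (G:ℝ) - 2 / N) atTop (nhds (1 / (G:ℝ))) := by
      have := (tendsto_const_div_atTop_nhds_zero_nat (2:ℝ))
      have h2 := (tendsto_const_nhds (x := 1 / (G:ℝ)) (f := atTop)).sub this
      simpa using h2
    have hhi : Tendsto (fun N : ℕ => 1 / (G:ℝ) + 1 / N) atTop (nhds (1 / (G:ℝ))) := by
      have := (tendsto_const_div_atTop_nhds_zero_nat (1:ℝ))
      have h2 := (tendsto_const_nhds (x := 1 / (G:ℝ)) (f := atTop)).add this
      simpa using h2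
    refine tendsto_of_tendsto_of_tendsto_of_le_of_le' hlo hhi ?_ ?_
    · filter_upwards [eventually_ge_atTop 1] with N hN
      have hNR : (0:ℝ) < N := by exact_mod_cast hN
      rw [le_div_iff₀ hNR]
      have hc := hcount_lb N
      have hcR : ((N / G : ℕ) : ℝ) ≤ (countIn E N : ℝ) + 1 := by exact_mod_cast hc
      have hdiv : (N : ℝ) < ((N / G : ℕ) : ℝ) * G + G := by
        have h1 := Nat.div_add_mod N G
        have h2 := Nat.mod_lt N hGpos
        have h3 : N < G * (N / G) + G := by omega
        have h4 : (N : ℝ) < (G : ℝ) * ((N / G : ℕ) : ℝ) + G := by exact_mod_cast h3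
        linarith
      have : (N : ℝ) / G < ((N / G : ℕ) : ℝ) + 1 := by
        rw [div_lt_iff₀ hGR]; linarith
      have hNG : (1 / (G:ℝ) - 2 / N) * N = (N : ℝ) / G - 2 := by
        field_simp
      rw [hNG]
      linarith
    · filter_upwards [eventually_ge_atTop 1] with N hN
      have hNR : (0:ℝ) < N := by exact_mod_cast hN
      rw [div_le_iff₀ hNR]
      have hc := hcount_ub N
      have hcR : (countIn E N : ℝ) ≤ ((N / G : ℕ) : ℝ) + 1 := by exact_mod_cast hc
      have hdiv : ((N / G : ℕ) : ℝ) * G ≤ N := by exact_mod_cast Nat.div_mul_le_self N G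
      have : ((N / G : ℕ) : ℝ) ≤ (N : ℝ) / G := by
        rw [le_div_iff₀ hGR]; linarith
      have hNG : (1 / (G:ℝ) + 1 / N) * N = (N : ℝ) / G + 1 := by
        field_simp
      rw [hNG]
      linarith
  · -- emptiness
    rw [Set.eq_empty_iff_forall_notMem]
    intro n hn
    rw [Set.mem_iInter] at hn
    have hdi : ∀ i, distNearestInt (α i * (u i n : ℝ)) ≤ 2 / K := by
      intro i
      obtain ⟨m, m', hm, hm', heq⟩ := hn i
      have hcast : (u i n : ℝ) = (m' : ℝ) - (m : ℝ) := by
        have : u i n = (m' : ℤ) - (m : ℤ) := by omega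
        rw [this]; push_cast; ring
      have h1 : α i * (u i n : ℝ) = α i * m' - α i * m := by rw [hcast]; ring
      rw [h1]
      have h2 := dni_sub (α i * m') (α i * m)
      have h3 := hEprop m' hm' i
      have h4 := hEprop m hm i
      have : (2:ℝ) / K = 1 / K + 1 / K := by ring
      rw [this]
      linarith
    have hsum : distNearestInt (∑ i, α i * (u i n : ℝ)) ≤ 2 * k / K := by
      calc distNearestInt (∑ i, α i * (u i n : ℝ))
          ≤ ∑ i, distNearestInt (α i * (u i n : ℝ)) := dni_sum _ _
        _ ≤ ∑ _i : Fin k, 2 / (K:ℝ) := Finset.sum_le_sum (fun i _ => hdi i)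
        _ = k * (2 / K) := by rw [Finset.sum_const, Finset.card_univ]; simp [mul_comm]
        _ = 2 * k / K := by ring
    have hkey : δ ≤ distNearestInt (∑ i, α i * (u i n : ℝ)) := by
      have he : (∑ i, α i * (u i n : ℝ)) = β * (∑ i, θ i * (u i n : ℝ)) := by
        rw [Finset.mul_sum]
        exact Finset.sum_congr rfl (fun i _ => by rw [hα]; ring)
      rw [he]
      have h5 := dni_lower (β * P.eval (n : ℝ)) (β * (∑ i, θ i * (u i n : ℝ)))
      have h6 : |β * P.eval (n : ℝ) - β * (∑ i, θ i * (u i n : ℝ))| ≤ β * D := by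
        rw [show β * P.eval (n : ℝ) - β * (∑ i, θ i * (u i n : ℝ))
            = β * (P.eval (n : ℝ) - ∑ i, θ i * (u i n : ℝ)) by ring,
          abs_mul, abs_of_pos hβ]
        have := hD n
        rw [abs_sub_comm] at this
        nlinarith
      have h7 := hlow n
      rw [hδdef]
      linarith
    linarith
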